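/- Fix σ, λ > 0 with λ ≤ 1. Let ξ : ℝ → ℝ² be σ-Lipschitz and set r(x,t) = |x − ξ(t)|. Then there exists a constant C₂ = C₂(σ, λ) such that for all x ∈ ℝ² and all t, ∫_{t−λ}^{t} (4π(t−s))^{−1} exp(−|x − ξ(s)|²/(4(t−s))) ds ≤ C₂ |log r(x,t)| + C₂ for r(x,t) < 1. -/

import Mathlib

open MeasureTheory Real Set

/-- Integrability of the dominating function (positive-variable version). -/
lemma aux_min_integrableOn (a : ℝ) (ha : 0 < a) (u v : ℝ) (hu : 0 ≤ u) :
    IntegrableOn (fun τ : ℝ => min a⁻¹ τ⁻¹) (Ioc u v) := by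
  apply Integrable.mono' (g := fun _ => a⁻¹)
    (integrableOn_const measure_Ioc_lt_top.ne)
  · exact (measurable_const.min measurable_inv).aestronglyMeasurable
  · filter_upwards [ae_restrict_mem measurableSet_Ioc] with τ hτ
    have h0 : (0:ℝ) ≤ τ⁻¹ := inv_nonneg.2 (le_trans hu hτ.1.le)
    rw [Real.norm_eq_abs, abs_of_nonneg (le_min (inv_nonneg.2 ha.le) h0)]
    exact min_le_left _ _

/-- Integrability of the dominating function (time-reflected version). -/
lemma aux_min_integrableOn' (a : ℝ) (ha : 0 < a) (u t K : ℝ) (hK : 0 ≤ K) :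
    IntegrableOn (fun s : ℝ => K * min a⁻¹ (t - s)⁻¹) (Ioc u t) := by
  apply Integrable.mono' (g := fun _ => K * a⁻¹)
    (integrableOn_const measure_Ioc_lt_top.ne)
  · exact ((measurable_const.min ((measurable_const.sub measurable_id).inv)).const_mul
      K).aestronglyMeasurable
  · filter_upwards [ae_restrict_mem measurableSet_Ioc] with s hs
    have h0 : (0:ℝ) ≤ (t - s)⁻¹ := inv_nonneg.2 (by linarith [hs.2])
    rw [Real.norm_eq_abs, abs_of_nonneg (mul_nonneg hK (le_min (inv_nonneg.2 ha.le) h0))]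
    exact mul_le_mul_of_nonneg_left (min_le_left _ _) hK

/-- The model integral bound. -/
lemma aux_model (a lam : ℝ) (ha : 0 < a) (ha1 : a ≤ 1) (hlam : 0 < lam) (hlam1 : lam ≤ 1) :
    ∫ τ in Ioc (0:ℝ) lam, min a⁻¹ τ⁻¹ ≤ 1 - Real.log a := by
  have hloga : Real.log a ≤ 0 := Real.log_nonpos ha.le ha1
  have hint : ∀ u v : ℝ, 0 ≤ u → IntegrableOn (fun τ : ℝ => min a⁻¹ τ⁻¹) (Ioc u v) :=
    fun u v hu => aux_min_integrableOn a ha u v hu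
  rcases le_or_gt lam a with h | h
  · have h1 : ∫ τ in Ioc (0:ℝ) lam, min a⁻¹ τ⁻¹ ≤ ∫ _ in Ioc (0:ℝ) lam, a⁻¹ := by
      apply setIntegral_mono_on (hint 0 lam le_rfl)
        (integrableOn_const measure_Ioc_lt_top.ne) measurableSet_Ioc
      intro τ _; exact min_le_left _ _
    have h2 : ∫ _ in Ioc (0:ℝ) lam, a⁻¹ = lam * a⁻¹ := by
      rw [setIntegral_const, Real.volume_real_Ioc_of_le (by linarith), smul_eq_mul]
      ring_nf
    have h3 : lam * a⁻¹ ≤ 1 := by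
      rw [← mul_inv_cancel₀ ha.ne']
      exact mul_le_mul_of_nonneg_right h (inv_nonneg.2 ha.le)
    linarith
  · have hsplit : Ioc (0:ℝ) lam = Ioc 0 a ∪ Ioc a lam := (Ioc_union_Ioc_eq_Ioc ha.le h.le).symm
    rw [hsplit, setIntegral_union (Set.Ioc_disjoint_Ioc_of_le le_rfl) measurableSet_Ioc
      (hint 0 a le_rfl) (hint a lam ha.le)]
    have h1 : ∫ τ in Ioc (0:ℝ) a, min a⁻¹ τ⁻¹ ≤ 1 := by
      have hb : ∫ τ in Ioc (0:ℝ) a, min a⁻¹ τ⁻¹ ≤ ∫ _ in Ioc (0:ℝ) a, a⁻¹ := by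
        apply setIntegral_mono_on (hint 0 a le_rfl)
          (integrableOn_const measure_Ioc_lt_top.ne) measurableSet_Ioc
        intro τ _; exact min_le_left _ _
      have h2 : ∫ _ in Ioc (0:ℝ) a, a⁻¹ = a * a⁻¹ := by
        rw [setIntegral_const, Real.volume_real_Ioc_of_le (by linarith), smul_eq_mul]
        ring_nf
      rw [h2, mul_inv_cancel₀ ha.ne'] at hb
      exact hb
    have h2 : ∫ τ in Ioc a lam, min a⁻¹ τ⁻¹ = Real.log lam - Real.log a := by
      have he : ∀ τ ∈ Ioc a lam, min a⁻¹ τ⁻¹ = τ⁻¹ := by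
        intro τ hτ
        exact min_eq_right (inv_anti₀ ha hτ.1.le)
      rw [setIntegral_congr_fun measurableSet_Ioc he, ← intervalIntegral.integral_of_le h.le,
        integral_inv (by
          intro h0
          rw [Set.mem_uIcc] at h0
          rcases h0 with ⟨h0, _⟩ | ⟨_, h0⟩ <;> linarith),
        Real.log_div (by linarith) ha.ne']
    have hloglam : Real.log lam ≤ 0 := Real.log_nonpos hlam.le hlam1
    linarith

lemma aux_step2 (r d σ τ : ℝ) (hr0 : 0 < r) (hστ : 0 ≤ σ * τ)
    (step1 : r ≤ d + σ * τ) : r ^ 2 / 2 - σ ^ 2 * τ ^ 2 ≤ d ^ 2 := by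
  nlinarith [sq_nonneg (d - σ * τ),
    mul_nonneg (sub_nonneg.2 step1) (by linarith : (0:ℝ) ≤ d + σ * τ + r)]

lemma aux_step3 (r d σ τ : ℝ) (hτ : 0 < τ) (hτ1 : τ ≤ 1)
    (step2 : r ^ 2 / 2 - σ ^ 2 * τ ^ 2 ≤ d ^ 2) : -d ^ 2 ≤ -4 * (r ^ 2 / 8) + σ ^ 2 * τ := by
  nlinarith [step2, mul_nonneg (mul_nonneg (sq_nonneg σ) hτ.le) (sub_nonneg.2 hτ1)]

lemma aux_final (K L E : ℝ) (hK : 0 < K) (hL : L ≤ 0) (hE : 0 ≤ E) (hE7 : E ≤ 7) :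
    K * (1 - (2 * L - E)) ≤ 8 * (K + 1) * -L + 8 * (K + 1) := by
  nlinarith [mul_nonneg hK.le (by linarith : (0:ℝ) ≤ 7 - E),
    mul_nonneg (neg_nonneg.2 hL) hK.le]

/-- Time integral of the 2-dimensional heat kernel along a `σ`-Lipschitz curve of
singularities: with `r(x,t) = |x − ξ(t)|`, there is `C₂ = C₂(σ,λ)` such that
`∫_{t−λ}^t (4π(t−s))⁻¹ e^{−|x−ξ(s)|²/(4(t−s))} ds ≤ C₂|log r(x,t)| + C₂` when `r(x,t) < 1`. -/
theorem stmt_12 (σ lam : ℝ) (hσ : 0 < σ) (hlam : 0 < lam) (hlam1 : lam ≤ 1) :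
    ∃ C : ℝ, 0 < C ∧
      ∀ ξ : ℝ → EuclideanSpace ℝ (Fin 2),
        (∀ s₁ s₂ : ℝ, ‖ξ s₁ - ξ s₂‖ ≤ σ * |s₁ - s₂|) →
        ∀ (x : EuclideanSpace ℝ (Fin 2)) (t : ℝ), ‖x - ξ t‖ < 1 →
          (∫ s in (t - lam)..t,
              (4 * Real.pi * (t - s))⁻¹ * Real.exp (-‖x - ξ s‖ ^ 2 / (4 * (t - s)))) ≤
            C * |Real.log ‖x - ξ t‖| + C := by
  set K : ℝ := (4 * Real.pi)⁻¹ * Real.exp (σ ^ 2 / 4) with hKdef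
  have hπ := Real.pi_pos
  have hK : 0 < K := by positivity
  refine ⟨8 * (K + 1), by positivity, ?_⟩
  intro ξ hξ x t hr
  set r : ℝ := ‖x - ξ t‖ with hrdef
  have hr0 : 0 ≤ r := norm_nonneg _
  have hle : t - lam ≤ t := by linarith
  rcases eq_or_lt_of_le hr0 with hr0 | hr0
  · -- r = 0 : the integrand is not integrable, so the integral is 0
    have hxt : x = ξ t := by
      have := (norm_eq_zero.mp hr0.symm)
      exact sub_eq_zero.mp this
    set c : ℝ := (4 * Real.pi)⁻¹ * Real.exp (-(σ ^ 2 / 4)) with hcdef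
    have hc : 0 < c := by positivity
    have hnint : ¬ IntervalIntegrable
        (fun s => (4 * Real.pi * (t - s))⁻¹ * Real.exp (-‖x - ξ s‖ ^ 2 / (4 * (t - s))))
        volume (t - lam) t := by
      intro h
      have hg : IntegrableOn (fun s => c * (t - s)⁻¹) (Ioc (t - lam) t) := by
        apply Integrable.mono' h.1
        · exact (((measurable_const.sub measurable_id).inv).const_mul c).aestronglyMeasurable
        · filter_upwards [ae_restrict_mem measurableSet_Ioc] with s hs
          rcases eq_or_lt_of_le hs.2 with heq | hlt
          · subst heq
            simp
          · set τ : ℝ := t - s with hτdef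
            have hτ : 0 < τ := by simp [hτdef]; linarith
            have hτ1 : τ ≤ 1 := by simp [hτdef]; linarith [hs.1]
            have hd : ‖x - ξ s‖ ≤ σ * τ := by
              rw [hxt]
              calc ‖ξ t - ξ s‖ ≤ σ * |t - s| := hξ t s
                _ = σ * τ := by rw [abs_of_pos hτ]
            have hexp : Real.exp (-(σ ^ 2 / 4)) ≤ Real.exp (-‖x - ξ s‖ ^ 2 / (4 * τ)) := by
              apply Real.exp_le_exp.2
              rw [neg_div, neg_le_neg_iff, div_le_iff₀ (by positivity)]
              nlinarith [hd, norm_nonneg (x - ξ s), sq_nonneg σ, hτ1, hτ.le,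
                mul_nonneg (sq_nonneg σ) hτ.le, mul_nonneg hσ.le hτ.le]
            rw [Real.norm_eq_abs, abs_of_nonneg (by positivity)]
            calc c * τ⁻¹ = (4 * Real.pi)⁻¹ * τ⁻¹ * Real.exp (-(σ ^ 2 / 4)) := by
                  rw [hcdef]; ring
              _ = (4 * Real.pi * τ)⁻¹ * Real.exp (-(σ ^ 2 / 4)) := by
                  rw [mul_inv (4 * Real.pi) τ]
              _ ≤ (4 * Real.pi * τ)⁻¹ * Real.exp (-‖x - ξ s‖ ^ 2 / (4 * τ)) :=
                  mul_le_mul_of_nonneg_left hexp (by positivity)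
      have hII : IntervalIntegrable (fun s => c * (t - s)⁻¹) volume (t - lam) t :=
        ⟨hg, by rw [Set.Ioc_eq_empty (by linarith)]; exact integrableOn_empty⟩
      have h2 : IntervalIntegrable (fun s : ℝ => (s - t)⁻¹) volume (t - lam) t := by
        have h3 := hII.const_mul (-c⁻¹)
        have h4 : (fun s : ℝ => -c⁻¹ * (c * (t - s)⁻¹)) = fun s : ℝ => (s - t)⁻¹ := by
          funext s
          rw [show t - s = -(s - t) by ring, inv_neg]
          field_simp
        rwa [h4] at h3
      rw [intervalIntegrable_sub_inv_iff] at h2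
      rcases h2 with h2 | h2
      · linarith
      · exact h2 Set.right_mem_uIcc
    rw [intervalIntegral.integral_undef hnint]
    have h1 : (0:ℝ) ≤ |Real.log r| := abs_nonneg _
    nlinarith [hK.le]
  · -- r > 0
    set a : ℝ := r ^ 2 / 8 with hadef
    have ha : 0 < a := by positivity
    have ha1 : a ≤ 1 := by nlinarith
    have hpt : ∀ s ∈ Ioc (t - lam) t,
        (4 * Real.pi * (t - s))⁻¹ * Real.exp (-‖x - ξ s‖ ^ 2 / (4 * (t - s)))
          ≤ K * min a⁻¹ (t - s)⁻¹ := by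
      intro s hs
      rcases eq_or_lt_of_le hs.2 with heq | hlt
      · subst heq
        simp [min_eq_right (inv_nonneg.2 ha.le)]
      · set τ : ℝ := t - s with hτdef
        have hτ : 0 < τ := by simp [hτdef]; linarith
        have hτ1 : τ ≤ 1 := by simp [hτdef]; linarith [hs.1]
        set d : ℝ := ‖x - ξ s‖ with hddef
        have hd0 : 0 ≤ d := norm_nonneg _
        have step1 : r ≤ d + σ * τ := by
          calc r ≤ ‖x - ξ s‖ + ‖ξ s - ξ t‖ := norm_sub_le_norm_sub_add_norm_sub _ _ _
            _ ≤ d + σ * τ := by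
                have := hξ s t
                rw [abs_sub_comm, abs_of_pos hτ] at this
                linarith
        have hστ : 0 ≤ σ * τ := mul_nonneg hσ.le hτ.le
        have step2 : r ^ 2 / 2 - σ ^ 2 * τ ^ 2 ≤ d ^ 2 :=
          aux_step2 r d σ τ hr0 hστ step1
        have step3 : -d ^ 2 / (4 * τ) ≤ -(a / τ) + σ ^ 2 / 4 := by
          rw [div_le_iff₀ (by positivity)]
          have hexpand : (-(a / τ) + σ ^ 2 / 4) * (4 * τ) = -4 * a + σ ^ 2 * τ := by
            field_simp
          rw [hexpand, hadef]
          exact aux_step3 r d σ τ hτ hτ1 step2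
        have hE1 : Real.exp (-d ^ 2 / (4 * τ))
            ≤ Real.exp (σ ^ 2 / 4) * Real.exp (-(a / τ)) := by
          rw [← Real.exp_add]
          exact Real.exp_le_exp.2 (by linarith)
        have hE2 : Real.exp (-(a / τ)) ≤ 1 :=
          Real.exp_le_one_iff.2 (neg_nonpos.2 (by positivity))
        have hE3 : Real.exp (-(a / τ)) ≤ a⁻¹ * τ := by
          have h1 : a / τ ≤ Real.exp (a / τ) := by
            have := Real.add_one_le_exp (a / τ); linarith
          rw [Real.exp_neg]
          calc (Real.exp (a / τ))⁻¹ ≤ (a / τ)⁻¹ := by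
                apply inv_anti₀ (by positivity) h1
            _ = a⁻¹ * τ := by rw [inv_div, div_eq_inv_mul]
        rcases le_total a⁻¹ τ⁻¹ with hm | hm
        · rw [min_eq_left hm]
          calc (4 * Real.pi * τ)⁻¹ * Real.exp (-d ^ 2 / (4 * τ))
              ≤ (4 * Real.pi * τ)⁻¹ * (Real.exp (σ ^ 2 / 4) * (a⁻¹ * τ)) := by
                apply mul_le_mul_of_nonneg_left _ (by positivity)
                exact hE1.trans (mul_le_mul_of_nonneg_left hE3 (Real.exp_pos _).le)
            _ = K * a⁻¹ := by
                rw [hKdef, mul_inv (4 * Real.pi) τ]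
                field_simp
        · rw [min_eq_right hm]
          calc (4 * Real.pi * τ)⁻¹ * Real.exp (-d ^ 2 / (4 * τ))
              ≤ (4 * Real.pi * τ)⁻¹ * (Real.exp (σ ^ 2 / 4) * 1) := by
                apply mul_le_mul_of_nonneg_left _ (by positivity)
                exact hE1.trans (mul_le_mul_of_nonneg_left hE2 (Real.exp_pos _).le)
            _ = K * τ⁻¹ := by
                rw [hKdef, mul_inv (4 * Real.pi) τ]
                ring
    have hlogr : Real.log r ≤ 0 := Real.log_nonpos hr0.le hr.le
    have habs : |Real.log r| = -Real.log r := abs_of_nonpos hlogr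
    have hloga : Real.log a = 2 * Real.log r - Real.log 8 := by
      rw [hadef, Real.log_div (by positivity) (by norm_num), Real.log_pow]
      push_cast; ring
    have hlog8 : Real.log 8 ≤ 7 := by
      have := Real.log_le_sub_one_of_pos (by norm_num : (0:ℝ) < 8)
      linarith
    have hlog8' : 0 ≤ Real.log 8 := Real.log_nonneg (by norm_num)
    calc (∫ s in (t - lam)..t,
            (4 * Real.pi * (t - s))⁻¹ * Real.exp (-‖x - ξ s‖ ^ 2 / (4 * (t - s))))
        = ∫ s in Ioc (t - lam) t,
            (4 * Real.pi * (t - s))⁻¹ * Real.exp (-‖x - ξ s‖ ^ 2 / (4 * (t - s))) :=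
          intervalIntegral.integral_of_le hle
      _ ≤ ∫ s in Ioc (t - lam) t, K * min a⁻¹ (t - s)⁻¹ := by
          apply integral_mono_of_nonneg
          · filter_upwards [ae_restrict_mem measurableSet_Ioc] with s hs
            have h1 : (0:ℝ) ≤ 4 * Real.pi * (t - s) := by
              have : (0:ℝ) ≤ t - s := by linarith [hs.2]
              positivity
            exact mul_nonneg (inv_nonneg.2 h1) (Real.exp_pos _).le
          · exact aux_min_integrableOn' a ha (t - lam) t K hK.le
          · filter_upwards [ae_restrict_mem measurableSet_Ioc] with s hs using hpt s hs
      _ = K * ∫ s in Ioc (t - lam) t, min a⁻¹ (t - s)⁻¹ := integral_const_mul _ _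
      _ = K * ∫ τ in Ioc (0:ℝ) lam, min a⁻¹ τ⁻¹ := by
          congr 1
          rw [← intervalIntegral.integral_of_le hle]
          have := intervalIntegral.integral_comp_sub_left
            (a := t - lam) (b := t) (fun τ : ℝ => min a⁻¹ τ⁻¹) t
          rw [this]
          rw [sub_self, show t - (t - lam) = lam by ring,
            intervalIntegral.integral_of_le hlam.le]
      _ ≤ K * (1 - Real.log a) :=
          mul_le_mul_of_nonneg_left (aux_model a lam ha ha1 hlam hlam1) hK.le
      _ ≤ 8 * (K + 1) * |Real.log r| + 8 * (K + 1) := by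
          rw [hloga, habs]
          exact aux_final K (Real.log r) (Real.log 8) hK hlogr hlog8' hlog8
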